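/- Let φ = (1+√5)/2, γ = arccos(1/3), θ₃ = 2π/3, θ₅ = 2π/5, and define βₙ = 2·arctan(√(cos²(γ/2)−cos²(θₙ/2))/cos(θₙ/2)). Then β₃ + β₅ = 2π/3. -/

import Mathlib

set_option maxHeartbeats 1000000 in
theorem stmt13 (φ γ θ₃ θ₅ β₃ β₅ : ℝ) (hφ : φ = (1 + Real.sqrt 5) / 2)
    (hγ : γ = Real.arccos (1 / 3))
    (hθ₃ : θ₃ = 2 * Real.pi / 3) (hθ₅ : θ₅ = 2 * Real.pi / 5)
    (hβ₃ : β₃ = 2 * Real.arctan (Real.sqrt (Real.cos (γ / 2) ^ 2 - Real.cos (θ₃ / 2) ^ 2)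
        / Real.cos (θ₃ / 2)))
    (hβ₅ : β₅ = 2 * Real.arctan (Real.sqrt (Real.cos (γ / 2) ^ 2 - Real.cos (θ₅ / 2) ^ 2)
        / Real.cos (θ₅ / 2))) :
    β₃ + β₅ = 2 * Real.pi / 3 := by
  have s5 : Real.sqrt 5 ^ 2 = 5 := Real.sq_sqrt (by norm_num)
  have s3 : Real.sqrt 3 ^ 2 = 3 := Real.sq_sqrt (by norm_num)
  have s5nn : (0:ℝ) ≤ Real.sqrt 5 := Real.sqrt_nonneg 5
  have s3pos : (0:ℝ) < Real.sqrt 3 := Real.sqrt_pos.2 (by norm_num)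
  have s5lb : (2:ℝ) < Real.sqrt 5 := by nlinarith
  have s5ub : Real.sqrt 5 < 3 := by nlinarith
  have hcγ : Real.cos γ = 1 / 3 := by
    rw [hγ]; exact Real.cos_arccos (by norm_num) (by norm_num)
  have hhalf : Real.cos (γ / 2) ^ 2 = 2 / 3 := by
    have := Real.cos_sq (γ / 2)
    rw [show 2 * (γ / 2) = γ by ring, hcγ] at this
    rw [this]; norm_num
  have hc3 : Real.cos (θ₃ / 2) = 1 / 2 := by
    rw [hθ₃, show 2 * Real.pi / 3 / 2 = Real.pi / 3 by ring, Real.cos_pi_div_three]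
  have hc5 : Real.cos (θ₅ / 2) = (1 + Real.sqrt 5) / 4 := by
    rw [hθ₅, show 2 * Real.pi / 5 / 2 = Real.pi / 5 by ring, Real.cos_pi_div_five]
  have hβ₃' : β₃ = 2 * Real.arctan (Real.sqrt 5 / Real.sqrt 3) := by
    rw [hβ₃, hhalf, hc3]
    congr 2
    have h1 : (2:ℝ)/3 - (1/2)^2 = (Real.sqrt 5 / (2 * Real.sqrt 3)) ^ 2 := by
      field_simp; nlinarith
    rw [h1, Real.sqrt_sq (by positivity)]
    field_simp
  have hβ₅' : β₅ = 2 * Real.arctan ((Real.sqrt 5 - 2) / Real.sqrt 3) := by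
    rw [hβ₅, hhalf, hc5]
    congr 2
    have h1 : (2:ℝ)/3 - ((1 + Real.sqrt 5)/4)^2 = ((3 - Real.sqrt 5) / (4 * Real.sqrt 3)) ^ 2 := by
      field_simp; nlinarith
    rw [h1, Real.sqrt_sq (div_nonneg (by linarith) (by positivity))]
    rw [div_eq_div_iff (by positivity) (ne_of_gt s3pos)]
    field_simp
    ring_nf
    linear_combination (-1:ℝ) * s5
  have hab : Real.sqrt 5 / Real.sqrt 3 * ((Real.sqrt 5 - 2) / Real.sqrt 3) < 1 := by
    rw [div_mul_div_comm, div_lt_one (by positivity)]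
    nlinarith
  have hsum : Real.arctan (Real.sqrt 5 / Real.sqrt 3)
      + Real.arctan ((Real.sqrt 5 - 2) / Real.sqrt 3) = Real.pi / 3 := by
    rw [Real.arctan_add hab]
    have h2 : (Real.sqrt 5 / Real.sqrt 3 + (Real.sqrt 5 - 2) / Real.sqrt 3)
        / (1 - Real.sqrt 5 / Real.sqrt 3 * ((Real.sqrt 5 - 2) / Real.sqrt 3)) = Real.sqrt 3 := by
      rw [div_eq_iff (ne_of_gt (by linarith : (0:ℝ) < 1 - Real.sqrt 5 / Real.sqrt 3 * ((Real.sqrt 5 - 2) / Real.sqrt 3)))]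
      field_simp
      ring_nf
      linear_combination s5 - s3
    rw [h2, ← Real.tan_pi_div_three,
      Real.arctan_tan (by linarith [Real.pi_pos]) (by linarith [Real.pi_pos])]
  rw [hβ₃', hβ₅']
  linarith [hsum]
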